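/- Let (F, <_F) and (G, <_G) be ordered groups. Then there exists a bi-invariant strict total order ≺ on F * G extending <_F and <_G along the canonical inclusions, such that the canonical homomorphism α : F * G → F × G is an order-homomorphism with respect to ≺ and the lexicographic ordering of F × G. -/

import Mathlib

namespace VinoAux
set_option linter.unusedSectionVars false
set_option linter.unnecessarySeqFocus false

theorem tri_of {α : Sort*} {r : α → α → Prop} {a b : α} (h : r a b ∨ a = b ∨ r b a) :
    ¬ r a b → ¬ r b a → a = b :=
  fun h1 h2 => h.elim (fun h => absurd h h1) (fun h => h.elim id (fun h => absurd h h2))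

/-- Elements of the free product monoid `Γ ∗ ⟨z⟩`: `hd` is the first group letter,
`rt` is the *reversed* list of the remaining group letters (one after each `z`). -/
structure FP (Γ : Type*) where
  hd : Γ
  rt : List Γ

namespace FP

variable {Γ : Type*} [Group Γ]

@[ext] theorem ext' {a b : FP Γ} (h1 : a.hd = b.hd) (h2 : a.rt = b.rt) : a = b := by
  cases a; cases b; simp_all

instance : Mul (FP Γ) :=
  ⟨fun a b =>
    match a with
    | ⟨h, []⟩ => ⟨h * b.hd, b.rt⟩
    | ⟨h, g :: gs⟩ => ⟨h, b.rt ++ (g * b.hd) :: gs⟩⟩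

instance : One (FP Γ) := ⟨⟨1, []⟩⟩

theorem mul_def_nil (h : Γ) (b : FP Γ) : (⟨h, []⟩ : FP Γ) * b = ⟨h * b.hd, b.rt⟩ := rfl

theorem mul_def_cons (h g : Γ) (gs : List Γ) (b : FP Γ) :
    (⟨h, g :: gs⟩ : FP Γ) * b = ⟨h, b.rt ++ (g * b.hd) :: gs⟩ := rfl

theorem one_def : (1 : FP Γ) = ⟨1, []⟩ := rfl

instance : Monoid (FP Γ) where
  mul_assoc a b c := by
    obtain ⟨ha, (_ | ⟨g, gs⟩)⟩ := a
    · obtain ⟨hb, (_ | ⟨g', gs'⟩)⟩ := b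
      · simp [mul_def_nil, mul_assoc]
      · simp [mul_def_nil, mul_def_cons]
    · obtain ⟨hb, (_ | ⟨g', gs'⟩)⟩ := b
      · obtain ⟨hc, rc⟩ := c
        simp [mul_def_nil, mul_def_cons, mul_assoc]
      · obtain ⟨hc, rc⟩ := c
        simp [mul_def_cons, mul_def_nil]
    -- remaining structure handled by simp above
  one_mul a := by
    obtain ⟨h, r⟩ := a
    simp [one_def, mul_def_nil]
  mul_one a := by
    obtain ⟨h, (_ | ⟨g, gs⟩)⟩ := a
    · simp [one_def, mul_def_nil]
    · simp [one_def, mul_def_cons]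

/-- group-like elements -/
def gm : Γ →* FP Γ where
  toFun γ := ⟨γ, []⟩
  map_one' := rfl
  map_mul' x y := by simp [mul_def_nil]

theorem gm_mul (γ : Γ) (m : FP Γ) : gm γ * m = ⟨γ * m.hd, m.rt⟩ := rfl

/-- the extra free generator `z` -/
def z : FP Γ := ⟨1, [1]⟩

theorem z_mul (m : FP Γ) : (z : FP Γ) * m = ⟨1, m.rt ++ [m.hd]⟩ := by
  simp [z, mul_def_cons]

/-- powers of `z` -/
def zr (k : ℕ) : FP Γ := ⟨1, List.replicate k 1⟩

theorem zr_zero : (zr 0 : FP Γ) = 1 := rfl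

theorem zr_one : (zr 1 : FP Γ) = z := rfl

theorem zr_mul (k : ℕ) (hk : 1 ≤ k) (m : FP Γ) :
    (zr k : FP Γ) * m = ⟨1, m.rt ++ m.hd :: List.replicate (k - 1) 1⟩ := by
  cases k with
  | zero => omega
  | succ n => simp [zr, List.replicate_succ, mul_def_cons]

theorem one_mul_z (m : FP Γ) : (zr 1 : FP Γ) * m = ⟨1, m.rt ++ [m.hd]⟩ := by
  rw [zr_one, z_mul]

theorem gm_left_cancel (γ : Γ) (a b : FP Γ) (h : gm γ * a = gm γ * b) : a = b := by
  obtain ⟨ha, ra⟩ := a; obtain ⟨hb, rb⟩ := b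
  simp only [gm_mul, FP.mk.injEq] at h
  exact FP.ext' (mul_left_cancel h.1) h.2

theorem z_left_cancel (a b : FP Γ) (h : (z : FP Γ) * a = z * b) : a = b := by
  obtain ⟨ha, ra⟩ := a; obtain ⟨hb, rb⟩ := b
  simp only [z_mul, FP.mk.injEq] at h
  have := h.2
  have hlen : ra.length = rb.length := by
    have := congrArg List.length this; simpa using this
  obtain ⟨h1, h2⟩ := List.append_inj this (by simpa using hlen)
  simp only [List.cons.injEq] at h2
  exact FP.ext' h2.1 h1

theorem deg_mul (a b : FP Γ) : (a * b).rt.length = a.rt.length + b.rt.length := by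
  obtain ⟨h, (_ | ⟨g, gs⟩)⟩ := a
  · simp [mul_def_nil]
  · simp [mul_def_cons]; omega

end FP

section LexHelp

variable {α : Type*} (r : α → α → Prop) [IsIrrefl α r]

theorem lex_append_iff : ∀ (l a b : List α), List.Lex r (l ++ a) (l ++ b) ↔ List.Lex r a b := by
  intro l
  induction l with
  | nil => simp
  | cons x xs ih => intro a b; simpa [List.lex_cons_iff] using ih a b

theorem lex_append_of_lex : ∀ (a b c d : List α), a.length = b.length →
    List.Lex r a b → List.Lex r (a ++ c) (b ++ d) := by
  intro a
  induction a with
  | nil => intro b c d hl h; cases h <;> simp_all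
  | cons x xs ih =>
    intro b c d hl h
    cases b with
    | nil => simp at hl
    | cons y ys =>
      cases h with
      | rel h => exact List.Lex.rel h
      | cons h => exact List.Lex.cons (ih ys c d (by simpa using hl) h)

theorem lex_concat_cases : ∀ (u v : List α) (x y : α), u.length = v.length →
    List.Lex r (u ++ [x]) (v ++ [y]) → List.Lex r u v ∨ (u = v ∧ r x y) := by
  intro u
  induction u with
  | nil =>
    intro v x y hl h
    cases v with
    | nil =>
      right; refine ⟨rfl, ?_⟩
      simpa using h
    | cons b bs => simp at hl
  | cons a as ih =>
    intro v x y hl h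
    cases v with
    | nil => simp at hl
    | cons b bs =>
      cases h with
      | rel h => exact Or.inl (List.Lex.rel h)
      | cons h =>
        rcases ih bs x y (by simpa using hl) h with h' | ⟨rfl, h'⟩
        · exact Or.inl (List.Lex.cons h')
        · exact Or.inr ⟨rfl, h'⟩

end LexHelp

namespace FP

variable {Γ : Type*} [Group Γ] [LinearOrder Γ]

/-- the flattened list of group letters, in word order -/
def glist (m : FP Γ) : List Γ := m.hd :: m.rt.reverse

theorem glist_inj : Function.Injective (glist (Γ := Γ)) := by
  intro a b h
  simp only [glist, List.cons.injEq] at h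
  exact FP.ext' h.1 (by simpa using congrArg List.reverse h.2)

/-- the order on `FP Γ`: compare `z`-degree, then the letter lists lexicographically. -/
def ltM (a b : FP Γ) : Prop :=
  a.rt.length < b.rt.length ∨
    (a.rt.length = b.rt.length ∧ List.Lex (· < ·) a.glist b.glist)

theorem ltM_STO : IsStrictTotalOrder (FP Γ) (ltM) where
  trichotomous a b := by
    refine tri_of ?_
    rcases Nat.lt_trichotomy a.rt.length b.rt.length with h | h | h
    · exact Or.inl (Or.inl h)
    · rcases trichotomous_of (List.Lex ((· < ·) : Γ → Γ → Prop)) a.glist b.glist with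
        h' | h' | h'
      · exact Or.inl (Or.inr ⟨h, h'⟩)
      · exact Or.inr (Or.inl (glist_inj h'))
      · exact Or.inr (Or.inr (Or.inr ⟨h.symm, h'⟩))
    · exact Or.inr (Or.inr (Or.inl h))
  irrefl a := by
    rintro (h | ⟨-, h⟩)
    · exact lt_irrefl _ h
    · exact irrefl_of (List.Lex ((· < ·) : Γ → Γ → Prop)) _ h
  trans a b c := by
    rintro (h | ⟨he, h⟩) (h' | ⟨he', h'⟩)
    · exact Or.inl (h.trans h')
    · exact Or.inl (he' ▸ h)
    · exact Or.inl (he ▸ h')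
    · haveI : IsStrictTotalOrder (List Γ) (List.Lex ((· < ·) : Γ → Γ → Prop)) :=
        { isStrictWeakOrder_of_isOrderConnected with }
      exact Or.inr ⟨he.trans he', _root_.trans h h'⟩

noncomputable instance : LinearOrder (FP Γ) :=
  letI := ltM_STO (Γ := Γ)
  letI : DecidableRel (ltM (Γ := Γ)) := Classical.decRel _
  linearOrderOfSTO ltM

theorem lt_iff {a b : FP Γ} : a < b ↔ ltM a b := Iff.rfl

section Invariance

variable (hR : ∀ x y w : Γ, x < y → x * w < y * w) (hL : ∀ x y w : Γ, x < y → w * x < w * y)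

include hR in
theorem mul_lt_mul_right' {a b : FP Γ} (h : a < b) (c : FP Γ) : a * c < b * c := by
  rw [lt_iff] at h ⊢
  obtain ⟨ha, Ra⟩ := a; obtain ⟨hb, Rb⟩ := b; obtain ⟨hc, Rc⟩ := c
  rcases h with h | ⟨hlen, hlex⟩
  · left
    rw [deg_mul, deg_mul]
    dsimp only at h ⊢
    omega
  · right
    refine ⟨by rw [deg_mul, deg_mul]; dsimp only at hlen ⊢; omega, ?_⟩
    dsimp only at hlen
    cases Ra with
    | nil =>
      cases Rb with
      | nil =>
        simp only [glist, List.reverse_nil, mul_def_nil] at hlex ⊢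
        cases hlex with
        | rel h => exact List.Lex.rel (hR _ _ _ h)
        | cons h => cases h
      | cons g' gs' => simp at hlen
    | cons g gs =>
      cases Rb with
      | nil => simp at hlen
      | cons g' gs' =>
        simp only [glist, mul_def_cons, List.reverse_cons, List.reverse_append,
          List.append_assoc, List.singleton_append] at hlex ⊢
        cases hlex with
        | rel h => exact List.Lex.rel h
        | cons h =>
          apply List.Lex.cons
          rcases lex_concat_cases _ _ _ _ _ (by simpa using hlen) h with h' | ⟨heq, h'⟩
          · exact lex_append_of_lex _ _ _ _ _ (by simpa using hlen) h'
          · rw [heq, lex_append_iff]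
            exact List.Lex.rel (hR _ _ _ h')

include hL in
theorem mul_lt_mul_left' {a b : FP Γ} (h : a < b) (c : FP Γ) : c * a < c * b := by
  rw [lt_iff] at h ⊢
  obtain ⟨ha, Ra⟩ := a; obtain ⟨hb, Rb⟩ := b; obtain ⟨hc, Rc⟩ := c
  rcases h with h | ⟨hlen, hlex⟩
  · left
    rw [deg_mul, deg_mul]
    dsimp only at h ⊢
    omega
  · right
    refine ⟨by rw [deg_mul, deg_mul]; dsimp only at hlen ⊢; omega, ?_⟩
    dsimp only at hlen
    cases Rc with
    | nil =>
      simp only [glist, mul_def_nil] at hlex ⊢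
      cases hlex with
      | rel h => exact List.Lex.rel (hL _ _ _ h)
      | cons h => exact List.Lex.cons h
    | cons q qs =>
      simp only [glist, mul_def_cons, List.reverse_cons, List.reverse_append,
        List.append_assoc, List.singleton_append] at hlex ⊢
      apply List.Lex.cons
      rw [lex_append_iff]
      cases hlex with
      | rel h => exact List.Lex.rel (hL _ _ _ h)
      | cons h => exact List.Lex.cons h

include hR hL in
theorem mul_le_mul'' {a b c d : FP Γ} (h1 : a ≤ b) (h2 : c ≤ d) : a * c ≤ b * d := by
  rcases eq_or_lt_of_le h1 with rfl | h1'
  · rcases eq_or_lt_of_le h2 with rfl | h2'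
    · exact le_rfl
    · exact le_of_lt (mul_lt_mul_left' hL h2' a)
  · rcases eq_or_lt_of_le h2 with rfl | h2'
    · exact le_of_lt (mul_lt_mul_right' hR h1' c)
    · exact le_of_lt ((mul_lt_mul_left' hL h2' a).trans (mul_lt_mul_right' hR h1' d))

include hR hL in
theorem mul_lt_of_ne {a b c d : FP Γ} (h1 : a ≤ b) (h2 : c ≤ d)
    (hne : ¬(a = b ∧ c = d)) : a * c < b * d := by
  rcases eq_or_lt_of_le h1 with rfl | h1'
  · rcases eq_or_lt_of_le h2 with rfl | h2'
    · exact absurd ⟨rfl, rfl⟩ hne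
    · exact mul_lt_mul_left' hL h2' a
  · exact lt_of_le_of_lt (mul_le_mul'' hR hL le_rfl h2) (mul_lt_mul_right' hR h1' d)

end Invariance

end FP

section Series

open scoped Classical

variable {Γ : Type*} [Group Γ] [LinearOrder Γ]

/-- the coefficient ring: the monoid algebra of `FP Γ` over `ℤ` -/
abbrev SA (Γ : Type*) [Group Γ] := MonoidAlgebra ℤ (FP Γ)

/-- the big ring: power series over `SA Γ` -/
abbrev WS (Γ : Type*) [Group Γ] := PowerSeries (SA Γ)

noncomputable def Lwd (x : SA Γ) (hx : x ≠ 0) : FP Γ :=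
  x.coeff.support.max' (Finsupp.support_nonempty_iff.mpr (mt MonoidAlgebra.coeff_eq_zero.mp hx))

theorem Lwd_mem (x : SA Γ) (hx : x ≠ 0) : Lwd x hx ∈ x.coeff.support := Finset.max'_mem _ _

theorem le_Lwd {x : SA Γ} (hx : x ≠ 0) {m : FP Γ} (hm : m ∈ x.coeff.support) : m ≤ Lwd x hx :=
  Finset.le_max' _ _ hm

theorem Lwd_single (m : FP Γ) {c : ℤ} (hc : c ≠ 0) :
    Lwd (MonoidAlgebra.single m c) (by simpa using hc) = m := by
  have : (MonoidAlgebra.single m c).coeff.support = {m} := Finsupp.support_single_ne_zero _ hc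
  unfold Lwd; simp only [this, Finset.max'_singleton]

/-- positivity of a monoid-algebra element: positive leading coefficient -/
def SPos (x : SA Γ) : Prop := ∃ hx : x ≠ 0, 0 < x.coeff (Lwd x hx)

theorem SPos_ne_zero {x : SA Γ} (h : SPos x) : x ≠ 0 := h.1

theorem SPos_single (m : FP Γ) {c : ℤ} (hc : 0 < c) : SPos (MonoidAlgebra.single m c) := by
  refine ⟨by simpa using hc.ne', ?_⟩
  rw [Lwd_single m hc.ne']
  simpa using hc

theorem SPos_one : SPos (1 : SA Γ) := by
  simpa [MonoidAlgebra.one_def] using SPos_single (1 : FP Γ) (c := 1) one_pos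

section WithInv

variable (hR : ∀ x y w : Γ, x < y → x * w < y * w) (hL : ∀ x y w : Γ, x < y → w * x < w * y)

include hR hL in
theorem mul_apply_Lwd (x y : SA Γ) (hx : x ≠ 0) (hy : y ≠ 0) :
    (x * y).coeff (Lwd x hx * Lwd y hy) = x.coeff (Lwd x hx) * y.coeff (Lwd y hy) := by
  rw [MonoidAlgebra.mul_apply]
  rw [Finsupp.sum]
  rw [Finset.sum_eq_single (Lwd x hx)]
  · rw [Finsupp.sum, Finset.sum_eq_single (Lwd y hy)]
    · simp
    · intro b hb hne
      rw [if_neg]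
      intro hcon
      have hblt : b < Lwd y hy := lt_of_le_of_ne (le_Lwd hy hb) hne
      exact absurd hcon (ne_of_lt (FP.mul_lt_mul_left' hL hblt _))
    · intro hmem
      simp [Finsupp.notMem_support_iff.mp hmem]
  · intro a ha hne
    rw [Finsupp.sum]
    apply Finset.sum_eq_zero
    intro b hb
    rw [if_neg]
    intro hcon
    have : a * b < Lwd x hx * Lwd y hy := by
      apply FP.mul_lt_of_ne hR hL (lt_of_le_of_ne (le_Lwd hx ha) hne).le (le_Lwd hy hb)
      rintro ⟨rfl, -⟩
      exact hne rfl
    exact absurd hcon (ne_of_lt this)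
  · intro hmem
    exact absurd (Lwd_mem x hx) hmem

include hR hL in
theorem mul_ne_zero' {x y : SA Γ} (hx : x ≠ 0) (hy : y ≠ 0) : x * y ≠ 0 := by
  intro hcon
  have h1 := mul_apply_Lwd hR hL x y hx hy
  rw [hcon] at h1
  have h2 : x.coeff (Lwd x hx) ≠ 0 := Finsupp.mem_support_iff.mp (Lwd_mem x hx)
  have h3 : y.coeff (Lwd y hy) ≠ 0 := Finsupp.mem_support_iff.mp (Lwd_mem y hy)
  exact mul_ne_zero h2 h3 (by simpa using h1.symm)

include hR hL in
theorem Lwd_mul {x y : SA Γ} (hx : x ≠ 0) (hy : y ≠ 0) :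
    Lwd (x * y) (mul_ne_zero' hR hL hx hy) = Lwd x hx * Lwd y hy := by
  apply le_antisymm
  · apply Finset.max'_le
    intro m hm
    obtain ⟨a, ha, b, hb, rfl⟩ := Finset.mem_mul.mp (MonoidAlgebra.support_coeff_mul_subset x y hm)
    exact FP.mul_le_mul'' hR hL (le_Lwd hx ha) (le_Lwd hy hb)
  · apply le_Lwd
    rw [Finsupp.mem_support_iff, mul_apply_Lwd hR hL x y hx hy]
    exact mul_ne_zero (Finsupp.mem_support_iff.mp (Lwd_mem x hx))
      (Finsupp.mem_support_iff.mp (Lwd_mem y hy))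

include hR hL in
theorem SPos_mul {x y : SA Γ} (h1 : SPos x) (h2 : SPos y) : SPos (x * y) := by
  obtain ⟨hx, hx'⟩ := h1
  obtain ⟨hy, hy'⟩ := h2
  refine ⟨mul_ne_zero' hR hL hx hy, ?_⟩
  rw [Lwd_mul hR hL hx hy, mul_apply_Lwd hR hL x y hx hy]
  exact mul_pos hx' hy'

theorem SPos_add {x y : SA Γ} (h1 : SPos x) (h2 : SPos y) : SPos (x + y) := by
  obtain ⟨hx, hx'⟩ := h1
  obtain ⟨hy, hy'⟩ := h2
  rcases lt_trichotomy (Lwd x hx) (Lwd y hy) with h | h | h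
  · have hval : (x + y).coeff (Lwd y hy) = y.coeff (Lwd y hy) := by
      have : x.coeff (Lwd y hy) = 0 := by
        by_contra hcon
        exact absurd (le_Lwd hx (Finsupp.mem_support_iff.mpr hcon)) (not_le.mpr h)
      rw [MonoidAlgebra.coeff_add, Finsupp.add_apply, this, zero_add]
    have hne : x + y ≠ 0 := by
      intro hcon
      rw [hcon] at hval
      exact (Finsupp.mem_support_iff.mp (Lwd_mem y hy)) (by simpa using hval.symm)
    refine ⟨hne, ?_⟩
    have hLe : Lwd (x + y) hne = Lwd y hy := by
      apply le_antisymm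
      · apply Finset.max'_le
        intro m hm
        rcases Finset.mem_union.mp (Finsupp.support_add (g₁ := x.coeff) (g₂ := y.coeff) hm) with hm' | hm'
        · exact (le_Lwd hx hm').trans h.le
        · exact le_Lwd hy hm'
      · exact le_Lwd hne (Finsupp.mem_support_iff.mpr (by rw [hval]; exact Finsupp.mem_support_iff.mp (Lwd_mem y hy)))
    rw [hLe, hval]; exact hy'
  · have hval : (x + y).coeff (Lwd x hx) = x.coeff (Lwd x hx) + y.coeff (Lwd y hy) := by
      rw [MonoidAlgebra.coeff_add, Finsupp.add_apply]; rw [← h]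
    have hpos : 0 < (x + y).coeff (Lwd x hx) := by rw [hval]; positivity
    have hne : x + y ≠ 0 := by
      intro hcon; rw [hcon] at hpos; simp at hpos
    refine ⟨hne, ?_⟩
    have hLe : Lwd (x + y) hne = Lwd x hx := by
      apply le_antisymm
      · apply Finset.max'_le
        intro m hm
        rcases Finset.mem_union.mp (Finsupp.support_add (g₁ := x.coeff) (g₂ := y.coeff) hm) with hm' | hm'
        · exact le_Lwd hx hm'
        · exact (le_Lwd hy hm').trans h.ge
      · exact le_Lwd hne (Finsupp.mem_support_iff.mpr hpos.ne')
    rw [hLe]; exact hpos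
  · have hval : (x + y).coeff (Lwd x hx) = x.coeff (Lwd x hx) := by
      have : y.coeff (Lwd x hx) = 0 := by
        by_contra hcon
        exact absurd (le_Lwd hy (Finsupp.mem_support_iff.mpr hcon)) (not_le.mpr h)
      rw [MonoidAlgebra.coeff_add, Finsupp.add_apply, this, add_zero]
    have hne : x + y ≠ 0 := by
      intro hcon
      rw [hcon] at hval
      exact (Finsupp.mem_support_iff.mp (Lwd_mem x hx)) (by simpa using hval.symm)
    refine ⟨hne, ?_⟩
    have hLe : Lwd (x + y) hne = Lwd x hx := by
      apply le_antisymm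
      · apply Finset.max'_le
        intro m hm
        rcases Finset.mem_union.mp (Finsupp.support_add (g₁ := x.coeff) (g₂ := y.coeff) hm) with hm' | hm'
        · exact le_Lwd hx hm'
        · exact (le_Lwd hy hm').trans h.le
      · exact le_Lwd hne (Finsupp.mem_support_iff.mpr (by rw [hval]; exact Finsupp.mem_support_iff.mp (Lwd_mem x hx)))
    rw [hLe, hval]; exact hx'

theorem SPos_or_neg {x : SA Γ} (hx : x ≠ 0) : SPos x ∨ SPos (-x) := by
  have hsupp : (-x).coeff.support = x.coeff.support := Finsupp.support_neg x.coeff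
  have hnx : (-x : SA Γ) ≠ 0 := by simpa using hx
  have hL' : Lwd (-x) hnx = Lwd x hx := by
    unfold Lwd
    congr 1
  have h0 : x.coeff (Lwd x hx) ≠ 0 := Finsupp.mem_support_iff.mp (Lwd_mem x hx)
  rcases lt_or_gt_of_ne h0 with h | h
  · right
    refine ⟨hnx, ?_⟩
    rw [hL', MonoidAlgebra.coeff_neg, Finsupp.neg_apply]
    exact neg_pos.mpr h
  · exact Or.inl ⟨hx, h⟩

end WithInv

open PowerSeries in
/-- positivity of a power series: the lowest nonzero coefficient is `SPos` -/
def Pos (x : WS Γ) : Prop :=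
  ∃ n : ℕ, (∀ k < n, PowerSeries.coeff k x = 0) ∧ SPos (PowerSeries.coeff n x)

theorem Pos_ne_zero {x : WS Γ} (h : Pos x) : x ≠ 0 := by
  obtain ⟨n, -, h2⟩ := h
  intro hcon
  rw [hcon] at h2
  exact SPos_ne_zero h2 (by simp)

section WithInv
variable (hR : ∀ x y w : Γ, x < y → x * w < y * w) (hL : ∀ x y w : Γ, x < y → w * x < w * y)

include hR hL in
theorem Pos_mul {x y : WS Γ} (h1 : Pos x) (h2 : Pos y) : Pos (x * y) := by
  obtain ⟨nx, hx1, hx2⟩ := h1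
  obtain ⟨ny, hy1, hy2⟩ := h2
  refine ⟨nx + ny, ?_, ?_⟩
  · intro k hk
    rw [PowerSeries.coeff_mul]
    apply Finset.sum_eq_zero
    rintro ⟨i, j⟩ hij
    rw [Finset.HasAntidiagonal.mem_antidiagonal] at hij
    dsimp only
    rcases Nat.lt_or_ge i nx with h | h
    · rw [hx1 i h, zero_mul]
    · rw [hy1 j (by omega), mul_zero]
  · rw [PowerSeries.coeff_mul]
    rw [Finset.sum_eq_single ((nx, ny) : ℕ × ℕ)]
    · exact SPos_mul hR hL hx2 hy2
    · rintro ⟨i, j⟩ hij hne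
      rw [Finset.HasAntidiagonal.mem_antidiagonal] at hij
      dsimp only
      rcases Nat.lt_trichotomy i nx with h | h | h
      · rw [hx1 i h, zero_mul]
      · exact absurd (by omega : j = ny) (fun hj => hne (by simp [h, hj]))
      · rw [hy1 j (by omega), mul_zero]
    · intro hcon
      exact absurd (Finset.HasAntidiagonal.mem_antidiagonal.mpr (rfl : (nx, ny).1 + (nx, ny).2 = nx + ny)) hcon

theorem Pos_add {x y : WS Γ} (h1 : Pos x) (h2 : Pos y) : Pos (x + y) := by
  obtain ⟨nx, hx1, hx2⟩ := h1
  obtain ⟨ny, hy1, hy2⟩ := h2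
  rcases Nat.lt_trichotomy nx ny with h | h | h
  · refine ⟨nx, ?_, ?_⟩
    · intro k hk
      rw [map_add, hx1 k hk, hy1 k (by omega), add_zero]
    · rw [map_add, hy1 nx h, add_zero]
      exact hx2
  · subst h
    refine ⟨nx, ?_, ?_⟩
    · intro k hk
      rw [map_add, hx1 k hk, hy1 k hk, add_zero]
    · rw [map_add]
      exact SPos_add hx2 hy2
  · refine ⟨ny, ?_, ?_⟩
    · intro k hk
      rw [map_add, hx1 k (by omega), hy1 k hk, add_zero]
    · rw [map_add, hx1 ny h, zero_add]
      exact hy2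

theorem Pos_or_neg {x : WS Γ} (hx : x ≠ 0) : Pos x ∨ Pos (-x) := by
  have hex : ∃ n, PowerSeries.coeff n x ≠ 0 := by
    by_contra hcon
    push_neg at hcon
    exact hx (PowerSeries.ext fun n => by simpa using hcon n)
  classical
  set n := Nat.find hex with hn
  have h1 : ∀ k < n, PowerSeries.coeff k x = 0 := fun k hk => by
    by_contra hcon
    have : n ≤ k := hn ▸ Nat.find_le hcon
    omega
  rcases SPos_or_neg (Nat.find_spec hex) with h | h
  · exact Or.inl ⟨n, h1, h⟩
  · right
    refine ⟨n, fun k hk => by rw [map_neg, h1 k hk, neg_zero], ?_⟩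
    rw [map_neg]
    exact h

theorem Pos_one : Pos (1 : WS Γ) :=
  ⟨0, by omega, by rw [PowerSeries.coeff_zero_eq_constantCoeff, map_one]; exact SPos_one⟩

end WithInv

end Series

section Units

variable {Γ : Type*} [Group Γ]

open MonoidAlgebra

noncomputable def CW : SA Γ →+* WS Γ := PowerSeries.C

theorem coeff_CW (s : SA Γ) (n : ℕ) :
    PowerSeries.coeff n (CW s) = if n = 0 then s else 0 := by
  simp [CW, PowerSeries.coeff_C]

/-- the group-like units -/
noncomputable def glW : Γ →* (WS Γ)ˣ where
  toFun γ :=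
    { val := CW (single (FP.gm γ) 1)
      inv := CW (single (FP.gm γ⁻¹) 1)
      val_inv := by
        rw [← map_mul, single_mul_single, ← map_mul, mul_inv_cancel, map_one, mul_one,
          ← MonoidAlgebra.one_def, map_one]
      inv_val := by
        rw [← map_mul, single_mul_single, ← map_mul, inv_mul_cancel, map_one, mul_one,
          ← MonoidAlgebra.one_def, map_one] }
  map_one' := by
    apply Units.ext
    show CW (single (FP.gm 1) 1) = 1
    rw [show (FP.gm (1 : Γ)) = 1 from map_one _, ← MonoidAlgebra.one_def, map_one]
  map_mul' x y := by
    apply Units.ext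
    show CW (single (FP.gm (x * y)) 1) = CW (single (FP.gm x) 1) * CW (single (FP.gm y) 1)
    rw [← map_mul, single_mul_single, mul_one, map_mul]

theorem glW_val (γ : Γ) : (glW γ).val = CW (single (FP.gm γ) 1) := rfl

theorem glW_inv_val (γ : Γ) : ((glW γ)⁻¹).val = CW (single (FP.gm γ⁻¹) 1) := rfl

/-- the unit `1 + z` -/
noncomputable def uu : WS Γ := PowerSeries.mk fun n =>
  if n = 0 then 1 else if n = 1 then single FP.z 1 else 0

/-- the inverse `(1+z)⁻¹ = ∑ (-z)^n` -/
noncomputable def uv : WS Γ := PowerSeries.mk fun n => single (FP.zr n) ((-1) ^ n)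

theorem coeff_uu (n : ℕ) : PowerSeries.coeff n (uu : WS Γ) =
    if n = 0 then 1 else if n = 1 then single FP.z 1 else 0 := PowerSeries.coeff_mk _ _

theorem coeff_uv (n : ℕ) : PowerSeries.coeff n (uv : WS Γ) =
    single (FP.zr n) ((-1) ^ n) := PowerSeries.coeff_mk _ _

theorem FP.z_mul_zr (k : ℕ) : (FP.z : FP Γ) * FP.zr k = FP.zr (k + 1) := by
  rw [FP.z_mul]
  simp [FP.zr, List.replicate_succ']

theorem FP.zr_mul_z (k : ℕ) : (FP.zr k : FP Γ) * FP.z = FP.zr (k + 1) := by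
  cases k with
  | zero => rw [FP.zr_zero, one_mul, FP.zr_one]
  | succ m =>
    rw [FP.zr_mul _ (by omega)]
    show (⟨1, List.cons (1:Γ) [] ++ (1:Γ) :: List.replicate (m + 1 - 1) 1⟩ : FP Γ) = _
    have : m + 1 - 1 = m := by omega
    rw [this]
    simp [FP.zr, List.replicate_succ]

private theorem sum_range_01 {A : Type*} [AddCommMonoid A] (g : ℕ → A) (n : ℕ) (hn : 1 ≤ n)
    (hg : ∀ i, 2 ≤ i → i ≤ n → g i = 0) : ∑ i ∈ Finset.range (n + 1), g i = g 0 + g 1 := by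
  have hsub : ({0, 1} : Finset ℕ) ⊆ Finset.range (n + 1) := by
    intro x hx
    simp only [Finset.mem_insert, Finset.mem_singleton] at hx
    rcases hx with rfl | rfl <;> simp [Finset.mem_range] <;> omega
  rw [← Finset.sum_subset hsub (fun x hx' hx => ?_)]
  · rw [Finset.sum_insert (by simp), Finset.sum_singleton]
  · rw [Finset.mem_range] at hx'
    simp only [Finset.mem_insert, Finset.mem_singleton] at hx
    exact hg x (by omega) (by omega)

theorem uu_mul_uv : (uu : WS Γ) * uv = 1 := by
  ext n
  rw [PowerSeries.coeff_mul, Finset.Nat.sum_antidiagonal_eq_sum_range_succ_mk]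
  cases n with
  | zero => simp [coeff_uu, coeff_uv, FP.zr_zero, MonoidAlgebra.one_def]
  | succ m =>
    rw [sum_range_01 _ (m + 1) (by omega) (fun i hi _ => by
      rw [coeff_uu, if_neg (by omega), if_neg (by omega), zero_mul])]
    rw [coeff_uu, coeff_uu, if_pos rfl, if_neg (by omega), if_pos rfl, one_mul,
      coeff_uv, coeff_uv, single_mul_single, one_mul]
    have h1 : m + 1 - 0 = m + 1 := by omega
    have h2 : m + 1 - 1 = m := by omega
    rw [h1, h2, FP.z_mul_zr]
    rw [← MonoidAlgebra.single_add]
    have : ((-1 : ℤ) ^ (m + 1) + (-1) ^ m) = 0 := by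
      rw [pow_succ]; ring
    rw [this, MonoidAlgebra.single_zero]
    rw [PowerSeries.coeff_one, if_neg (by omega)]

theorem uv_mul_uu : (uv : WS Γ) * uu = 1 := by
  ext n
  rw [PowerSeries.coeff_mul, Finset.Nat.sum_antidiagonal_eq_sum_range_succ_mk]
  cases n with
  | zero => simp [coeff_uu, coeff_uv, FP.zr_zero, MonoidAlgebra.one_def]
  | succ m =>
    rw [← Finset.sum_range_reflect]
    rw [sum_range_01 _ (m + 1) (by omega) (fun i h2i him => by
      have hii : m + 1 + 1 - 1 - i = m + 1 - i := by omega
      have hjj : m + 1 - (m + 1 - i) = i := by omega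
      dsimp only
      rw [hii, hjj, coeff_uu, if_neg (by omega), if_neg (by omega), mul_zero])]
    dsimp only
    have e0 : m + 1 + 1 - 1 - 0 = m + 1 := by omega
    have e0' : m + 1 - (m + 1) = 0 := by omega
    have e1 : m + 1 + 1 - 1 - 1 = m := by omega
    have e1' : m + 1 - m = 1 := by omega
    rw [e0, e0', e1, e1', coeff_uu, coeff_uu, if_pos rfl, if_neg (by omega), if_pos rfl,
      coeff_uv, coeff_uv, mul_one, single_mul_single, mul_one, FP.zr_mul_z]
    rw [← MonoidAlgebra.single_add]
    have : ((-1 : ℤ) ^ (m + 1) + (-1) ^ m) = 0 := by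
      rw [pow_succ]; ring
    rw [this, MonoidAlgebra.single_zero]
    rw [PowerSeries.coeff_one, if_neg (by omega)]

/-- the unit `1 + z` of the power series ring -/
noncomputable def uU : (WS Γ)ˣ := ⟨uu, uv, uu_mul_uv, uv_mul_uu⟩

theorem uU_val : (uU : (WS Γ)ˣ).val = uu := rfl
theorem uU_inv_val : ((uU : (WS Γ)ˣ)⁻¹).val = uv := rfl

end Units

section Inj

variable {Γ : Type*} [Group Γ]

open MonoidAlgebra

/-- letters: a `Bool` tag (true = first factor) and a group element -/
abbrev Lt (Γ : Type*) := Bool × Γ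

noncomputable def DU : Bool → (WS Γ)ˣ
  | true => uU
  | false => 1

noncomputable def eB (p : Lt Γ) : (WS Γ)ˣ := DU p.1 * glW p.2 * (DU p.1)⁻¹

noncomputable def EE : List (Lt Γ) → (WS Γ)ˣ
  | [] => 1
  | [p] => glW p.2
  | p :: q :: L => glW p.2 * ((DU p.1)⁻¹ * DU q.1) * EE (q :: L)

theorem prod_eB (L : List (Lt Γ)) (p : Lt Γ) :
    ((p :: L).map eB).prod =
      DU p.1 * EE (p :: L) * (DU ((p :: L).getLast (List.cons_ne_nil p L)).1)⁻¹ := by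
  induction L generalizing p with
  | nil => simp [eB, EE, mul_assoc]
  | cons q L ih =>
    rw [List.map_cons, List.prod_cons, ih q]
    rw [List.getLast_cons (List.cons_ne_nil q L)]
    show eB p * (DU q.1 * EE (q :: L) * (DU ((q :: L).getLast _).1)⁻¹) = _
    rw [EE]
    simp only [eB, mul_assoc]

theorem coeff_one_as_single (k : ℕ) :
    PowerSeries.coeff (R := SA Γ) k (1 : WS Γ) = single (FP.zr k) (if k = 0 then 1 else 0) := by
  rw [PowerSeries.coeff_one]
  split_ifs with h
  · rw [h, FP.zr_zero]; exact MonoidAlgebra.one_def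
  · exact (MonoidAlgebra.single_zero _).symm

theorem slot_coeff (b b' : Bool) (k : ℕ) :
    ∃ c : ℤ, PowerSeries.coeff k ((DU b)⁻¹ * DU b' : (WS Γ)ˣ).val = single (FP.zr k) c ∧
      (b ≠ b' → k = 1 → c = 1 ∨ c = -1) := by
  cases b <;> cases b' <;> simp only [DU]
  · -- false false : slot = 1
    refine ⟨if k = 0 then 1 else 0, ?_, by tauto⟩
    rw [inv_one, one_mul, Units.val_one, coeff_one_as_single]
  · -- false true : slot = uU
    refine ⟨if k = 0 then 1 else if k = 1 then 1 else 0, ?_, ?_⟩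
    · rw [inv_one, one_mul, uU_val, coeff_uu]
      split_ifs with h h'
      · rw [h, FP.zr_zero]; exact MonoidAlgebra.one_def
      · rw [h', FP.zr_one]
      · exact (MonoidAlgebra.single_zero _).symm
    · intro _ hk
      rw [if_neg (by omega), if_pos hk]
      exact Or.inl rfl
  · -- true false : slot = uU⁻¹
    refine ⟨(-1) ^ k, ?_, ?_⟩
    · rw [mul_one, uU_inv_val, coeff_uv]
    · intro _ hk
      rw [hk]
      simp
  · -- true true : slot = 1
    refine ⟨if k = 0 then 1 else 0, ?_, by tauto⟩
    rw [inv_mul_cancel, Units.val_one, coeff_one_as_single]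

theorem CW_mul_coeff (s : SA Γ) (Y : WS Γ) (n : ℕ) :
    PowerSeries.coeff n (CW s * Y) = s * PowerSeries.coeff n Y := by
  rw [PowerSeries.coeff_mul, Finset.sum_eq_single ((0, n) : ℕ × ℕ)]
  · rw [coeff_CW, if_pos rfl]
  · rintro ⟨i, j⟩ hij hne
    rw [Finset.HasAntidiagonal.mem_antidiagonal] at hij
    have hi : i ≠ 0 := by
      rintro rfl
      have : j = n := by simpa using hij
      exact hne (by rw [this])
    rw [coeff_CW, if_neg hi, zero_mul]
  · intro hcon
    exact absurd (Finset.HasAntidiagonal.mem_antidiagonal.mpr (by simp)) hcon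

theorem EE_val_cons (p q : Lt Γ) (L : List (Lt Γ)) :
    (EE (p :: q :: L)).val = CW (single (FP.gm p.2) 1) *
      (((DU p.1)⁻¹ * DU q.1 : (WS Γ)ˣ).val * (EE (q :: L)).val) := by
  rw [EE]
  simp only [Units.val_mul, glW_val, mul_assoc]

/-- block words: the possible support of `EE` -/
def BW : List (Lt Γ) → ℕ → Set (FP Γ)
  | [], _ => ∅
  | [p], d => {m | d = 0 ∧ m = FP.gm p.2}
  | p :: q :: L, d => {m | ∃ k ≤ d, ∃ m' ∈ BW (q :: L) (d - k), m = FP.gm p.2 * (FP.zr k * m')}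

theorem SuppE : ∀ (L : List (Lt Γ)) (p : Lt Γ) (d : ℕ) (m : FP Γ),
    m ∈ ((PowerSeries.coeff d) (EE (p :: L)).val).coeff.support → m ∈ BW (p :: L) d := by
  classical
  intro L
  induction L with
  | nil =>
    intro p d m hm
    rw [EE, glW_val, coeff_CW] at hm
    split_ifs at hm with h
    · refine ⟨h, ?_⟩
      simpa using Finsupp.support_single_subset hm
    · simp at hm
  | cons q L ih =>
    intro p d m hm
    rw [EE_val_cons, CW_mul_coeff] at hm
    obtain ⟨a, ha, y, hy, rfl⟩ := Finset.mem_mul.mp (MonoidAlgebra.support_coeff_mul_subset _ _ hm)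
    have ha' : a = FP.gm p.2 := by simpa using Finsupp.support_single_subset ha
    rw [PowerSeries.coeff_mul, MonoidAlgebra.coeff_sum] at hy
    obtain ⟨⟨i, j⟩, hij, hy'⟩ := Finsupp.mem_support_finset_sum _ hy
    rw [Finset.HasAntidiagonal.mem_antidiagonal] at hij
    obtain ⟨c, hc, -⟩ := slot_coeff (Γ := Γ) p.1 q.1 i
    rw [hc] at hy'
    obtain ⟨z', hz', w, hw, rfl⟩ := Finset.mem_mul.mp (MonoidAlgebra.support_coeff_mul_subset _ _ hy')
    have hz'' : z' = FP.zr i := by simpa using Finsupp.support_single_subset hz'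
    refine ⟨i, by omega, w, ?_, by rw [ha', hz'']⟩
    have : d - i = j := by omega
    rw [this]
    exact ih q j w hw

theorem BW_deg : ∀ (L : List (Lt Γ)) (p : Lt Γ) (d : ℕ) (m : FP Γ),
    m ∈ BW (p :: L) d → m.rt.length = d := by
  intro L
  induction L with
  | nil =>
    rintro p d m ⟨rfl, rfl⟩
    rfl
  | cons q L ih =>
    rintro p d m ⟨k, hk, m', hm', rfl⟩
    rw [FP.deg_mul, FP.deg_mul]
    have h1 := ih q (d - k) m' hm'
    have h2 : (FP.zr k : FP Γ).rt.length = k := by simp [FP.zr]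
    have h3 : (FP.gm p.2 : FP Γ).rt.length = 0 := rfl
    omega

theorem CL : ∀ (L : List (Lt Γ)) (p : Lt Γ) (d : ℕ) (m : FP Γ),
    m ∈ BW (p :: L) d → (p :: L).length ≤ d → (1 : Γ) ∈ m.rt.tail := by
  intro L
  induction L with
  | nil =>
    rintro p d m ⟨rfl, rfl⟩ hlen
    simp at hlen
  | cons q L ih =>
    rintro p d m ⟨k, hk, m', hm', rfl⟩ hlen
    simp only [List.length_cons] at hlen
    rcases Nat.lt_or_ge k 2 with hk2 | hk2
    · rcases Nat.lt_or_ge k 1 with hk1 | hk1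
      · -- k = 0
        have hk0 : k = 0 := by omega
        subst hk0
        rw [FP.zr_zero, one_mul, FP.gm_mul]
        exact ih q d m' (by simpa using hm') (by simp only [List.length_cons]; omega)
      · -- k = 1
        have hk1' : k = 1 := by omega
        subst hk1'
        rw [FP.zr_mul _ le_rfl, FP.gm_mul]
        have hmem := ih q (d - 1) m' hm' (by simp only [List.length_cons]; omega)
        cases hrt : m'.rt with
        | nil => rw [hrt] at hmem; simp at hmem
        | cons a as =>
          rw [hrt] at hmem
          simp only [List.tail_cons] at hmem ⊢
          show (1 : Γ) ∈ ((a :: as) ++ m'.hd :: List.replicate (1 - 1) 1).tail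
          simp only [List.cons_append, List.tail_cons]
          exact List.mem_append_left _ hmem
    · -- k ≥ 2
      rw [FP.zr_mul _ (by omega), FP.gm_mul]
      have hrep : (1 : Γ) ∈ List.replicate (k - 1) (1 : Γ) :=
        List.mem_replicate.mpr ⟨by omega, rfl⟩
      cases hrt : m'.rt with
      | nil =>
        show (1 : Γ) ∈ (([] : List Γ) ++ m'.hd :: List.replicate (k - 1) 1).tail
        simpa using hrep
      | cons a as =>
        show (1 : Γ) ∈ ((a :: as) ++ m'.hd :: List.replicate (k - 1) 1).tail
        simp only [List.cons_append, List.tail_cons]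
        refine List.mem_append_right _ ?_
        exact List.mem_cons_of_mem _ hrep

/-- the witness word -/
def wstar (p : Lt Γ) (L : List (Lt Γ)) : FP Γ := ⟨p.2, (L.map (·.2)).reverse⟩

theorem wstar_cons (p q : Lt Γ) (L : List (Lt Γ)) :
    wstar p (q :: L) = FP.gm p.2 * (FP.z * wstar q L) := by
  rw [FP.z_mul, FP.gm_mul]
  simp [wstar]

theorem gm_single_mul_apply (γ : Γ) (c : ℤ) (f : SA Γ) (m : FP Γ) :
    (single (FP.gm γ) c * f).coeff (FP.gm γ * m) = c * f.coeff m :=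
  f.coeff_single_mul_eq_mul_coeff _ fun a _ =>
    ⟨fun h => FP.gm_left_cancel γ a m h, fun h => h ▸ rfl⟩

theorem z_single_mul_apply (c : ℤ) (f : SA Γ) (m : FP Γ) :
    (single (FP.z : FP Γ) c * f).coeff (FP.z * m) = c * f.coeff m :=
  f.coeff_single_mul_eq_mul_coeff _ fun a _ =>
    ⟨fun h => FP.z_left_cancel a m h, fun h => h ▸ rfl⟩

theorem T_rt (q : Lt Γ) (L : List (Lt Γ)) :
    (FP.z * wstar q L).rt = (L.map (·.2)).reverse ++ [q.2] := by
  rw [FP.z_mul]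
  rfl

theorem T_rt_ne_one (q : Lt Γ) (L : List (Lt Γ)) (hq : q.2 ≠ 1)
    (hL : ∀ r ∈ L, r.2 ≠ (1 : Γ)) :
    ∀ x ∈ (FP.z * wstar q L).rt, x ≠ (1 : Γ) := by
  rw [T_rt]
  intro x hx
  rcases List.mem_append.mp hx with hx | hx
  · rw [List.mem_reverse] at hx
    obtain ⟨r, hr, rfl⟩ := List.mem_map.mp hx
    exact hL r hr
  · rw [List.mem_singleton] at hx
    exact hx ▸ hq

theorem Cmain : ∀ (L : List (Lt Γ)) (p : Lt Γ),
    (∀ r ∈ p :: L, r.2 ≠ (1 : Γ)) → List.IsChain (fun a b => a.1 ≠ b.1) (p :: L) →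
    ((PowerSeries.coeff L.length) (EE (p :: L)).val).coeff (wstar p L) = 1 ∨
    ((PowerSeries.coeff L.length) (EE (p :: L)).val).coeff (wstar p L) = -1 := by
  intro L
  induction L with
  | nil =>
    intro p _ _
    left
    rw [EE, glW_val, coeff_CW]
    simp only [List.length_nil, if_pos rfl]
    show (single (FP.gm p.2) 1 : SA Γ).coeff (FP.gm p.2) = 1
    simp
  | cons q L ih =>
    intro p hnt hch
    rw [EE_val_cons, CW_mul_coeff, wstar_cons]
    rw [gm_single_mul_apply, one_mul]
    rw [PowerSeries.coeff_mul, MonoidAlgebra.coeff_sum, Finset.sum_apply']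
    rw [Finset.sum_eq_single ((1, L.length) : ℕ × ℕ)]
    · -- the main term
      obtain ⟨c, hc, hc1⟩ := slot_coeff (Γ := Γ) p.1 q.1 1
      rw [hc, FP.zr_one]
      dsimp only
      rw [z_single_mul_apply]
      have halt : p.1 ≠ q.1 := (List.isChain_cons_cons.mp hch).1
      have hih := ih q (fun r hr => hnt r (List.mem_cons_of_mem p hr))
        (List.isChain_cons_cons.mp hch).2
      rcases hc1 halt rfl with rfl | rfl
      · rcases hih with h | h <;> rw [h] <;> simp
      · rcases hih with h | h <;> rw [h] <;> simp
    · -- other terms vanish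
      rintro ⟨i, j⟩ hij hne
      rw [Finset.HasAntidiagonal.mem_antidiagonal] at hij
      obtain ⟨c, hc, -⟩ := slot_coeff (Γ := Γ) p.1 q.1 i
      rw [hc]
      dsimp only
      rcases Nat.lt_trichotomy i 1 with hi | hi | hi
      · -- i = 0
        have hi0 : i = 0 := by omega
        subst hi0
        rw [FP.zr_zero, single_one_mul_apply]
        have hj : j = L.length + 1 := by
          simp only [List.length_cons] at hij; omega
        subst hj
        have hzero : ((PowerSeries.coeff (R := SA Γ) (L.length + 1)) (EE (q :: L)).val).coeff
            (FP.z * wstar q L) = 0 := by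
          rw [← Finsupp.notMem_support_iff]
          intro hsup
          have hbw := SuppE L q (L.length + 1) _ hsup
          have hone := CL L q (L.length + 1) _ hbw (List.length_cons (a := q) (as := L)).le
          have hne1 := T_rt_ne_one q L (hnt q (by simp))
            (fun r hr => hnt r (by simp [hr]))
          exact hne1 1 (List.mem_of_mem_tail hone) rfl
        rw [hzero, mul_zero]
      · -- i = 1 : excluded
        exfalso
        apply hne
        simp only [List.length_cons] at hij
        have : j = L.length := by omega
        rw [hi, this]
      · -- i ≥ 2
        rw [single_mul_apply_of_not_exists_mul]
        rintro ⟨a, ha⟩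
        have h1 : (FP.z * wstar q L).rt = a.rt ++ a.hd :: List.replicate (i - 1) (1 : Γ) := by
          rw [ha, FP.zr_mul _ (by omega)]
        have h2 : (FP.z * wstar q L).rt.getLast? = some q.2 := by
          rw [T_rt, List.getLast?_concat]
        have h3 : (FP.z * wstar q L).rt.getLast? = some (1 : Γ) := by
          rw [h1]
          have hsplit : a.hd :: List.replicate (i - 1) (1 : Γ) =
              (a.hd :: List.replicate (i - 2) 1) ++ [1] := by
            have h4 : i - 1 = (i - 2) + 1 := by omega
            rw [h4, List.replicate_succ']
            simp
          rw [hsplit, ← List.append_assoc, List.getLast?_concat]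
        rw [h2] at h3
        have : q.2 = (1 : Γ) := by injection h3
        exact absurd this (hnt q (by simp))
    · intro hcon
      exact absurd (Finset.HasAntidiagonal.mem_antidiagonal.mpr
        (by simp only [List.length_cons]; omega)) hcon

end Inj

section NeOne

variable {Γ : Type*} [Group Γ]

open MonoidAlgebra

theorem prod_eB_ne_one (p : Lt Γ) (L : List (Lt Γ))
    (hnt : ∀ r ∈ p :: L, r.2 ≠ (1 : Γ))
    (hch : List.IsChain (fun a b => a.1 ≠ b.1) (p :: L)) :
    ((p :: L).map eB).prod ≠ 1 := by
  intro hcon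
  rw [prod_eB] at hcon
  set b' := ((p :: L).getLast (List.cons_ne_nil p L)).1 with hb'
  rw [mul_inv_eq_one] at hcon
  have hEE : EE (p :: L) = (DU p.1)⁻¹ * DU b' := by
    rw [← hcon]
    group
  obtain ⟨c, hc, -⟩ := slot_coeff (Γ := Γ) p.1 b' L.length
  have h1 := Cmain L p hnt hch
  rw [hEE, hc] at h1
  have hv : (single (FP.zr L.length) c : SA Γ).coeff (wstar p L) = 0 := by
    apply Finsupp.single_eq_of_ne
    intro heq
    have : (FP.zr L.length : FP Γ).hd = (wstar p L).hd := by rw [heq]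
    exact hnt p (by simp) (by simpa [FP.zr, wstar] using this.symm)
  rw [hv] at h1
  rcases h1 with h | h <;> exact absurd h (by norm_num)

end NeOne

section PosFacts

variable {Γ : Type*} [Group Γ] [LinearOrder Γ]
variable (hR : ∀ x y w : Γ, x < y → x * w < y * w) (hL : ∀ x y w : Γ, x < y → w * x < w * y)

open MonoidAlgebra

theorem Pos_CW_single (m : FP Γ) {c : ℤ} (hc : 0 < c) : Pos (CW (single m c)) :=
  ⟨0, by omega, by rw [coeff_CW, if_pos rfl]; exact SPos_single m hc⟩

theorem Pos_glW (γ : Γ) : Pos (glW γ).val := Pos_CW_single _ one_pos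

theorem Pos_glW_inv (γ : Γ) : Pos ((glW γ)⁻¹).val := by
  rw [glW_inv_val]; exact Pos_CW_single _ one_pos

theorem Pos_uu : Pos (uu : WS Γ) :=
  ⟨0, by omega, by rw [coeff_uu, if_pos rfl]; exact SPos_one⟩

theorem Pos_uv : Pos (uv : WS Γ) :=
  ⟨0, by omega, by rw [coeff_uv]; exact SPos_single _ (by norm_num)⟩

/-- the subgroup of positive units with positive inverses -/
noncomputable def PosSub : Subgroup (WS Γ)ˣ where
  carrier := {x | Pos x.val ∧ Pos (↑x⁻¹ : WS Γ)}
  one_mem' := ⟨Pos_one, by rw [inv_one, Units.val_one]; exact Pos_one⟩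
  mul_mem' {a b} ha hb := ⟨by rw [Units.val_mul]; exact Pos_mul hR hL ha.1 hb.1,
    by rw [mul_inv_rev, Units.val_mul]; exact Pos_mul hR hL hb.2 ha.2⟩
  inv_mem' {a} ha := ⟨ha.2, by rw [inv_inv]; exact ha.1⟩

theorem uU_mem_PosSub : (uU : (WS Γ)ˣ) ∈ PosSub hR hL :=
  ⟨Pos_uu, by rw [uU_inv_val]; exact Pos_uv⟩

theorem glW_mem_PosSub (γ : Γ) : glW γ ∈ PosSub hR hL :=
  ⟨Pos_glW γ, Pos_glW_inv γ⟩

theorem mem_PosSub_pos {x : (WS Γ)ˣ} (hx : x ∈ PosSub hR hL) : Pos x.val := hx.1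

end PosFacts

end VinoAux

open VinoAux

/-- A bi-invariant strict total order on a group. -/
def IsBiOrder {G : Type*} [Group G] (lt : G → G → Prop) : Prop :=
  IsStrictTotalOrder G lt ∧ (∀ x y z : G, lt x y → lt (x * z) (y * z)) ∧
    (∀ x y z : G, lt x y → lt (z * x) (z * y))

/-- The canonical homomorphism `F * G → F × G` induced by the inclusions
`F → F × G` and `G → F × G`. -/
def canonicalMap (F G : Type*) [Group F] [Group G] : Monoid.Coprod F G →* F × G :=
  Monoid.Coprod.lift (MonoidHom.inl F G) (MonoidHom.inr F G)

/-- The free product of two ordered groups admits a bi-invariant ordering extending the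
given orderings for which the canonical homomorphism `F * G → F × G` is an
order-homomorphism onto the lexicographically ordered direct product. -/
theorem canonical_map_order_homomorphism {F G : Type*} [Group F] [Group G]
    (ltF : F → F → Prop) (ltG : G → G → Prop)
    (hF : IsBiOrder ltF) (hG : IsBiOrder ltG) :
    ∃ lt : Monoid.Coprod F G → Monoid.Coprod F G → Prop,
      IsBiOrder lt ∧
      (∀ x y : F, ltF x y ↔ lt (Monoid.Coprod.inl x) (Monoid.Coprod.inl y)) ∧
      (∀ x y : G, ltG x y ↔ lt (Monoid.Coprod.inr x) (Monoid.Coprod.inr y)) ∧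
      ∀ x y : Monoid.Coprod F G, (lt x y ∨ x = y) →
        ((ltF (canonicalMap F G x).1 (canonicalMap F G y).1 ∨
            ((canonicalMap F G x).1 = (canonicalMap F G y).1 ∧
              ltG (canonicalMap F G x).2 (canonicalMap F G y).2)) ∨
          canonicalMap F G x = canonicalMap F G y) := by
  classical
  obtain ⟨hFsto, hFr, hFl⟩ := hF
  obtain ⟨hGsto, hGr, hGl⟩ := hG
  haveI := hFsto
  haveI := hGsto
  -- the lexicographic order on `F × G`
  set ltP : F × G → F × G → Prop :=
    fun p q => ltF p.1 q.1 ∨ (p.1 = q.1 ∧ ltG p.2 q.2) with hltP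
  have hPsto : IsStrictTotalOrder (F × G) ltP :=
    { trichotomous := by
        intro p q
        refine tri_of ?_
        rcases trichotomous_of ltF p.1 q.1 with h | h | h
        · exact Or.inl (Or.inl h)
        · rcases trichotomous_of ltG p.2 q.2 with h' | h' | h'
          · exact Or.inl (Or.inr ⟨h, h'⟩)
          · exact Or.inr (Or.inl (Prod.ext h h'))
          · exact Or.inr (Or.inr (Or.inr ⟨h.symm, h'⟩))
        · exact Or.inr (Or.inr (Or.inl h))
      irrefl := by
        rintro p (h | ⟨-, h⟩)
        · exact irrefl_of ltF _ h
        · exact irrefl_of ltG _ h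
      trans := by
        rintro p q r (h | ⟨he, h⟩) (h' | ⟨he', h'⟩)
        · exact Or.inl (trans_of ltF h h')
        · exact Or.inl (he' ▸ h)
        · exact Or.inl (he ▸ h')
        · exact Or.inr ⟨he.trans he', trans_of ltG h h'⟩ }
  haveI := hPsto
  letI : DecidableRel ltP := Classical.decRel _
  letI linΓ : LinearOrder (F × G) := linearOrderOfSTO ltP
  have hRP : ∀ x y w : F × G, x < y → x * w < y * w := by
    intro x y w h
    show ltP (x * w) (y * w)
    rcases (h : ltP x y) with h | ⟨he, h⟩
    · exact Or.inl (hFr _ _ _ h)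
    · exact Or.inr ⟨by rw [Prod.fst_mul, Prod.fst_mul, he], hGr _ _ _ h⟩
  have hLP : ∀ x y w : F × G, x < y → w * x < w * y := by
    intro x y w h
    show ltP (w * x) (w * y)
    rcases (h : ltP x y) with h | ⟨he, h⟩
    · exact Or.inl (hFl _ _ _ h)
    · exact Or.inr ⟨by rw [Prod.fst_mul, Prod.fst_mul, he], hGl _ _ _ h⟩
  -- the embedding into the units of the power series ring
  set ψ : Monoid.Coprod F G →* (WS (F × G))ˣ :=
    Monoid.Coprod.lift
      ((MulAut.conj (uU : (WS (F × G))ˣ)).toMonoidHom.comp (glW.comp (MonoidHom.inl F G)))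
      (glW.comp (MonoidHom.inr F G)) with hψ
  have hψl : ∀ f : F, ψ (Monoid.Coprod.inl f) = uU * glW ((f, 1) : F × G) * uU⁻¹ := by
    intro f
    rw [hψ, Monoid.Coprod.lift_apply_inl]
    rfl
  have hψr : ∀ g : G, ψ (Monoid.Coprod.inr g) = glW ((1, g) : F × G) := by
    intro g
    rw [hψ, Monoid.Coprod.lift_apply_inr]
    rfl
  -- letters
  set embC : Bool × (F × G) → Monoid.Coprod F G :=
    fun p => if p.1 = true then Monoid.Coprod.inl p.2.1 else Monoid.Coprod.inr p.2.2 with hembC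
  set Pure : Bool × (F × G) → Prop :=
    fun r => (r.1 = true → r.2.2 = 1) ∧ (r.1 = false → r.2.1 = 1) with hPure
  -- normal form
  have key : ∀ k : Monoid.Coprod F G, ∃ L : List (Bool × (F × G)),
      (∀ r ∈ L, r.2 ≠ 1) ∧ List.IsChain (fun a b => a.1 ≠ b.1) L ∧
      (∀ r ∈ L, Pure r) ∧ k = (L.map embC).prod := by
    intro k
    induction k using Monoid.Coprod.induction_on' with
    | one => exact ⟨[], by simp, by simp, by simp, by simp⟩
    | inl_mul m x ih =>
      obtain ⟨L, h1, h2, h3, rfl⟩ := ih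
      by_cases hm : m = 1
      · exact ⟨L, h1, h2, h3, by rw [hm, map_one, one_mul]⟩
      · cases L with
        | nil =>
          refine ⟨[(true, (m, 1))], ?_, by simp, ?_, ?_⟩
          · intro r hr
            rw [List.mem_singleton] at hr
            subst hr
            simp only [ne_eq, Prod.mk_eq_one, not_and]
            exact fun h => absurd h hm
          · intro r hr
            rw [List.mem_singleton] at hr
            subst hr
            exact ⟨fun _ => rfl, by simp⟩
          · simp [hembC]
        | cons p L0 =>
          by_cases hp : p.1 = true
          · have hpure : p.2 = (p.2.1, 1) := by
              have := (h3 p (by simp)).1 hp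
              exact Prod.ext rfl this
            have hemb : embC p = Monoid.Coprod.inl p.2.1 := by rw [hembC]; simp [hp]
            by_cases hmp : m * p.2.1 = 1
            · refine ⟨L0, fun r hr => h1 r (by simp [hr]), h2.tail,
                fun r hr => h3 r (by simp [hr]), ?_⟩
              rw [List.map_cons, List.prod_cons, hemb, ← mul_assoc, ← map_mul, hmp,
                map_one, one_mul]
            · refine ⟨(true, (m * p.2.1, 1)) :: L0, ?_, ?_, ?_, ?_⟩
              · intro r hr
                rcases List.mem_cons.mp hr with rfl | hr
                · simp only [ne_eq, Prod.mk_eq_one, not_and]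
                  exact fun h => absurd h hmp
                · exact h1 r (by simp [hr])
              · cases L0 with
                | nil => simp
                | cons q L1 =>
                  rw [List.isChain_cons_cons] at h2 ⊢
                  exact ⟨by rw [← hp]; exact h2.1, h2.2⟩
              · intro r hr
                rcases List.mem_cons.mp hr with rfl | hr
                · exact ⟨fun _ => rfl, by simp⟩
                · exact h3 r (by simp [hr])
              · conv_lhs => rw [List.map_cons, List.prod_cons, hemb, ← mul_assoc, ← map_mul]
                conv_rhs => rw [List.map_cons, List.prod_cons]
                rfl
          · refine ⟨(true, (m, 1)) :: p :: L0, ?_, ?_, ?_, ?_⟩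
            · intro r hr
              rcases List.mem_cons.mp hr with rfl | hr
              · simp only [ne_eq, Prod.mk_eq_one, not_and]
                exact fun h => absurd h hm
              · exact h1 r hr
            · rw [List.isChain_cons_cons]
              exact ⟨by simp [hp], h2⟩
            · intro r hr
              rcases List.mem_cons.mp hr with rfl | hr
              · exact ⟨fun _ => rfl, by simp⟩
              · exact h3 r hr
            · conv_rhs => rw [List.map_cons, List.prod_cons]
              rfl
    | inr_mul m x ih =>
      obtain ⟨L, h1, h2, h3, rfl⟩ := ih
      by_cases hm : m = 1
      · exact ⟨L, h1, h2, h3, by rw [hm, map_one, one_mul]⟩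
      · cases L with
        | nil =>
          refine ⟨[(false, (1, m))], ?_, by simp, ?_, ?_⟩
          · intro r hr
            rw [List.mem_singleton] at hr
            subst hr
            simp only [ne_eq, Prod.mk_eq_one, not_and]
            exact fun _ => hm
          · intro r hr
            rw [List.mem_singleton] at hr
            subst hr
            exact ⟨by simp, fun _ => rfl⟩
          · simp [hembC]
        | cons p L0 =>
          by_cases hp : p.1 = false
          · have hpure : p.2 = (1, p.2.2) := by
              have := (h3 p (by simp)).2 hp
              exact Prod.ext this rfl
            have hemb : embC p = Monoid.Coprod.inr p.2.2 := by
              rw [hembC]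
              simp [hp]
            by_cases hmp : m * p.2.2 = 1
            · refine ⟨L0, fun r hr => h1 r (by simp [hr]), h2.tail,
                fun r hr => h3 r (by simp [hr]), ?_⟩
              rw [List.map_cons, List.prod_cons, hemb, ← mul_assoc, ← map_mul, hmp,
                map_one, one_mul]
            · refine ⟨(false, (1, m * p.2.2)) :: L0, ?_, ?_, ?_, ?_⟩
              · intro r hr
                rcases List.mem_cons.mp hr with rfl | hr
                · simp only [ne_eq, Prod.mk_eq_one, not_and]
                  exact fun _ => hmp
                · exact h1 r (by simp [hr])
              · cases L0 with
                | nil => simp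
                | cons q L1 =>
                  rw [List.isChain_cons_cons] at h2 ⊢
                  exact ⟨by rw [← hp]; exact h2.1, h2.2⟩
              · intro r hr
                rcases List.mem_cons.mp hr with rfl | hr
                · exact ⟨by simp, fun _ => rfl⟩
                · exact h3 r (by simp [hr])
              · conv_lhs => rw [List.map_cons, List.prod_cons, hemb, ← mul_assoc, ← map_mul]
                conv_rhs => rw [List.map_cons, List.prod_cons]
                rfl
          · refine ⟨(false, (1, m)) :: p :: L0, ?_, ?_, ?_, ?_⟩
            · intro r hr
              rcases List.mem_cons.mp hr with rfl | hr
              · simp only [ne_eq, Prod.mk_eq_one, not_and]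
                exact fun _ => hm
              · exact h1 r hr
            · rw [List.isChain_cons_cons]
              exact ⟨by simp [hp], h2⟩
            · intro r hr
              rcases List.mem_cons.mp hr with rfl | hr
              · exact ⟨by simp, fun _ => rfl⟩
              · exact h3 r hr
            · conv_rhs => rw [List.map_cons, List.prod_cons]
              rfl
  -- ψ sends letters to eB
  have heB : ∀ r : Bool × (F × G), Pure r → ψ (embC r) = eB r := by
    rintro ⟨b, γ⟩ hpure
    cases b
    · have h1 : γ = (1, γ.2) := Prod.ext (hpure.2 rfl) rfl
      show ψ (Monoid.Coprod.inr γ.2) = eB (false, γ)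
      rw [hψr]
      show glW (1, γ.2) = DU false * glW γ * (DU false)⁻¹
      rw [← h1, DU]
      rw [inv_one, one_mul, mul_one]
    · have h1 : γ = (γ.1, 1) := Prod.ext rfl (hpure.1 rfl)
      show ψ (Monoid.Coprod.inl γ.1) = eB (true, γ)
      rw [hψl]
      show uU * glW (γ.1, 1) * uU⁻¹ = DU true * glW γ * (DU true)⁻¹
      rw [← h1, DU]
  -- injectivity of ψ
  have hinj1 : ∀ k : Monoid.Coprod F G, ψ k = 1 → k = 1 := by
    intro k hk
    obtain ⟨L, h1, h2, h3, rfl⟩ := key k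
    cases L with
    | nil => simp
    | cons p L0 =>
      exfalso
      have hmap : (p :: L0).map (fun r => ψ (embC r)) = (p :: L0).map eB :=
        List.map_congr_left fun r hr => heB r (h3 r hr)
      have heq : ψ (((p :: L0).map embC).prod) = ((p :: L0).map eB).prod := by
        rw [map_list_prod, List.map_map]
        exact congrArg List.prod hmap
      exact prod_eB_ne_one p L0 h1 h2 (heq ▸ hk)
  have hinj : ∀ x y : Monoid.Coprod F G, ψ x = ψ y → x = y := by
    intro x y h
    have : ψ (x * y⁻¹) = 1 := by rw [map_mul, map_inv, h, mul_inv_cancel]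
    have := hinj1 _ this
    rwa [mul_inv_eq_one] at this
  -- positivity of values of ψ
  have hposψ : ∀ k : Monoid.Coprod F G, ψ k ∈ PosSub hRP hLP := by
    intro k
    induction k using Monoid.Coprod.induction_on with
    | inl f =>
      rw [hψl]
      exact mul_mem (mul_mem (uU_mem_PosSub hRP hLP) (glW_mem_PosSub hRP hLP _))
        (inv_mem (uU_mem_PosSub hRP hLP))
    | inr g =>
      rw [hψr]
      exact glW_mem_PosSub hRP hLP _
    | mul a b ha hb => rw [map_mul]; exact mul_mem ha hb
  set cm : Monoid.Coprod F G →* F × G := canonicalMap F G with hcm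
  -- the order
  refine ⟨fun x y => ltP (cm x) (cm y) ∨
    (cm x = cm y ∧ Pos ((ψ y).val - (ψ x).val)), ?_, ?_, ?_, ?_⟩
  · refine ⟨?_, ?_, ?_⟩
    · -- strict total order
      refine { trichotomous := ?_, irrefl := ?_, trans := ?_ }
      · intro x y
        refine tri_of (r := fun x y => ltP (cm x) (cm y) ∨
          (cm x = cm y ∧ Pos ((ψ y).val - (ψ x).val))) ?_
        by_cases hxy : x = y
        · exact Or.inr (Or.inl hxy)
        · by_cases hcmeq : cm x = cm y
          · have hne : (ψ y).val - (ψ x).val ≠ 0 := by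
              rw [sub_ne_zero]
              intro hval
              exact hxy (hinj x y (Units.ext hval.symm))
            rcases Pos_or_neg hne with h | h
            · exact Or.inl (Or.inr ⟨hcmeq, h⟩)
            · refine Or.inr (Or.inr (Or.inr ⟨hcmeq.symm, ?_⟩))
              rw [neg_sub] at h
              exact h
          · rcases trichotomous_of ltP (cm x) (cm y) with h | h | h
            · exact Or.inl (Or.inl h)
            · exact absurd h hcmeq
            · exact Or.inr (Or.inr (Or.inl h))
      · rintro x (h | ⟨-, h⟩)
        · exact irrefl_of ltP _ h
        · rw [sub_self] at h
          exact Pos_ne_zero h rfl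
      · rintro x y z (h | ⟨he, h⟩) (h' | ⟨he', h'⟩)
        · exact Or.inl (trans_of ltP h h')
        · exact Or.inl (he' ▸ h)
        · exact Or.inl (he ▸ h')
        · refine Or.inr ⟨he.trans he', ?_⟩
          have := Pos_add h' h
          rwa [sub_add_sub_cancel] at this
    · -- right invariance
      rintro x y z (h | ⟨he, h⟩)
      · exact Or.inl (by rw [map_mul, map_mul]; exact hRP _ _ (cm z) h)
      · refine Or.inr ⟨by rw [map_mul, map_mul, he], ?_⟩
        rw [map_mul, map_mul, Units.val_mul, Units.val_mul, ← sub_mul]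
        exact Pos_mul hRP hLP h (hposψ z).1
    · -- left invariance
      rintro x y z (h | ⟨he, h⟩)
      · exact Or.inl (by rw [map_mul, map_mul]; exact hLP _ _ (cm z) h)
      · refine Or.inr ⟨by rw [map_mul, map_mul, he], ?_⟩
        rw [map_mul, map_mul, Units.val_mul, Units.val_mul, ← mul_sub]
        exact Pos_mul hRP hLP (hposψ z).1 h
  · -- extension along inl
    intro x y
    have hcmx : cm (Monoid.Coprod.inl x) = ((x, 1) : F × G) := by
      rw [hcm, canonicalMap, Monoid.Coprod.lift_apply_inl]
      rfl
    have hcmy : cm (Monoid.Coprod.inl y) = ((y, 1) : F × G) := by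
      rw [hcm, canonicalMap, Monoid.Coprod.lift_apply_inl]
      rfl
    constructor
    · intro h
      exact Or.inl (by rw [hcmx, hcmy]; exact Or.inl h)
    · rintro (h | ⟨he, h⟩)
      · rw [hcmx, hcmy] at h
        rcases h with h | ⟨-, h⟩
        · exact h
        · exact absurd h (irrefl_of ltG _)
      · rw [hcmx, hcmy] at he
        have : x = y := congrArg Prod.fst he
        subst this
        rw [sub_self] at h
        exact absurd rfl (Pos_ne_zero h)
  · -- extension along inr
    intro x y
    have hcmx : cm (Monoid.Coprod.inr x) = ((1, x) : F × G) := by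
      rw [hcm, canonicalMap, Monoid.Coprod.lift_apply_inr]
      rfl
    have hcmy : cm (Monoid.Coprod.inr y) = ((1, y) : F × G) := by
      rw [hcm, canonicalMap, Monoid.Coprod.lift_apply_inr]
      rfl
    constructor
    · intro h
      exact Or.inl (by rw [hcmx, hcmy]; exact Or.inr ⟨rfl, h⟩)
    · rintro (h | ⟨he, h⟩)
      · rw [hcmx, hcmy] at h
        rcases h with h | ⟨-, h⟩
        · exact absurd h (irrefl_of ltF _)
        · exact h
      · rw [hcmx, hcmy] at he
        have : x = y := congrArg Prod.snd he
        subst this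
        rw [sub_self] at h
        exact absurd rfl (Pos_ne_zero h)
  · -- compatibility with the lexicographic order
    rintro x y (h | rfl)
    · rcases h with h | ⟨he, -⟩
      · exact Or.inl h
      · exact Or.inr he
    · exact Or.inr rfl
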